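/- Let p₀, p₁ ≥ 0 with p₀ + p₁ = 1, let b ∈ ℝ and s ∈ ℝ³ with |b| < |s|, and let α₀, α₁ ∈ ℝ³ satisfy |α₀|, |α₁| ≤ 1 and p₀α₀ + p₁α₁ = 0. Then p₀|b + s·α₀| + p₁|b + s·α₁| ≤ |s|, and the bound |s| is attained by p₀ = p₁ = 1/2, α₀ = −α₁ = s/|s|. -/

import Mathlib

set_option maxHeartbeats 1000000


open scoped RealInnerProductSpace

/-- The optimization underlying the assisted fidelity of imaginarity, case |b| < |s|:
p₀|b + s·α₀| + p₁|b + s·α₁| ≤ |s| under the POVM constraints, and the bound is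
attained by p₀ = p₁ = 1/2, α₀ = −α₁ = s/|s|. -/
theorem assisted_fidelity_optimization_lt
    (p₀ p₁ b : ℝ) (s α₀ α₁ : EuclideanSpace ℝ (Fin 3))
    (hp₀ : 0 ≤ p₀) (hp₁ : 0 ≤ p₁) (hp : p₀ + p₁ = 1)
    (hbs : |b| < ‖s‖) (hα₀ : ‖α₀‖ ≤ 1) (hα₁ : ‖α₁‖ ≤ 1)
    (hmean : p₀ • α₀ + p₁ • α₁ = 0) :
    p₀ * |b + ⟪s, α₀⟫| + p₁ * |b + ⟪s, α₁⟫| ≤ ‖s‖ ∧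
    (1/2 : ℝ) * |b + ⟪s, ‖s‖⁻¹ • s⟫| + (1/2 : ℝ) * |b + ⟪s, -(‖s‖⁻¹ • s)⟫| = ‖s‖ := by
  have hsn : (0:ℝ) < ‖s‖ := lt_of_le_of_lt (abs_nonneg b) hbs
  have hb1 : -‖s‖ < b := neg_lt_of_abs_lt hbs
  have hb2 : b < ‖s‖ := lt_of_abs_lt hbs
  constructor
  · set x₀ := ⟪s, α₀⟫ with hx₀
    set x₁ := ⟪s, α₁⟫ with hx₁
    have h0 : |x₀| ≤ ‖s‖ := by
      calc |x₀| ≤ ‖s‖ * ‖α₀‖ := abs_real_inner_le_norm s α₀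
        _ ≤ ‖s‖ * 1 := by nlinarith
        _ = ‖s‖ := mul_one _
    have h1 : |x₁| ≤ ‖s‖ := by
      calc |x₁| ≤ ‖s‖ * ‖α₁‖ := abs_real_inner_le_norm s α₁
        _ ≤ ‖s‖ * 1 := by nlinarith
        _ = ‖s‖ := mul_one _
    have heq : p₀ * x₀ + p₁ * x₁ = 0 := by
      rw [hx₀, hx₁, ← real_inner_smul_right, ← real_inner_smul_right,
        ← inner_add_right, hmean, inner_zero_right]
    have h0' := abs_le.mp h0
    have h1' := abs_le.mp h1
    have hS : p₀ * ‖s‖ + p₁ * ‖s‖ = ‖s‖ := by rw [← add_mul, hp, one_mul]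
    have hT : p₀ * b + p₁ * b = b := by rw [← add_mul, hp, one_mul]
    have hA1 : p₀ * x₀ ≤ p₀ * ‖s‖ := mul_le_mul_of_nonneg_left h0'.2 hp₀
    have hA2 : p₀ * (-‖s‖) ≤ p₀ * x₀ := mul_le_mul_of_nonneg_left h0'.1 hp₀
    have hB1 : p₁ * x₁ ≤ p₁ * ‖s‖ := mul_le_mul_of_nonneg_left h1'.2 hp₁
    have hB2 : p₁ * (-‖s‖) ≤ p₁ * x₁ := mul_le_mul_of_nonneg_left h1'.1 hp₁
    rcases le_total p₀ p₁ with hpc | hpc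
    · have hC1 : (p₁ - p₀) * b ≤ (p₁ - p₀) * ‖s‖ :=
        mul_le_mul_of_nonneg_left hb2.le (sub_nonneg.mpr hpc)
      have hC2 : (p₁ - p₀) * (-‖s‖) ≤ (p₁ - p₀) * b :=
        mul_le_mul_of_nonneg_left hb1.le (sub_nonneg.mpr hpc)
      rcases abs_cases (b + x₀) with ⟨e0, _⟩ | ⟨e0, _⟩ <;>
        rcases abs_cases (b + x₁) with ⟨e1, _⟩ | ⟨e1, _⟩ <;>
        rw [e0, e1] <;> linarith [hS, hT, hA1, hA2, hB1, hB2, hC1, hC2, heq]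
    · have hC1 : (p₀ - p₁) * b ≤ (p₀ - p₁) * ‖s‖ :=
        mul_le_mul_of_nonneg_left hb2.le (sub_nonneg.mpr hpc)
      have hC2 : (p₀ - p₁) * (-‖s‖) ≤ (p₀ - p₁) * b :=
        mul_le_mul_of_nonneg_left hb1.le (sub_nonneg.mpr hpc)
      rcases abs_cases (b + x₀) with ⟨e0, _⟩ | ⟨e0, _⟩ <;>
        rcases abs_cases (b + x₁) with ⟨e1, _⟩ | ⟨e1, _⟩ <;>
        rw [e0, e1] <;> linarith [hS, hT, hA1, hA2, hB1, hB2, hC1, hC2, heq]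
  · have hinner : ⟪s, ‖s‖⁻¹ • s⟫ = ‖s‖ := by
      rw [real_inner_smul_right, real_inner_self_eq_norm_sq]
      field_simp
    rw [inner_neg_right, hinner]
    rw [abs_of_pos (by linarith), abs_of_neg (by linarith)]
    ring
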